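/- arXiv:math/0111277 — 2 statements merged into one kernel-verified Lean document; each statement's English description precedes it below -/
import Mathlib

section
/- Let K be a field, n ≥ 1, and f, g ∈ M_n(K((t))) two n×n matrices of Laurent series. Let π : K((t))^n → K((t))^n be the componentwise K-linear projection onto K[[t]]^n replacing all coefficients in negative degrees by 0, and let m_f, m_g denote the multiplication operators by f and g on column vectors in K((t))^n. Set u := π ∘ m_g ∘ m_f − m_g ∘ π ∘ m_f. Then there exist integers a ≤ b such that u vanishes on t^b K[[t]]^n and the image of u is contained in t^a K[[t]]^n; moreover, for any such a and b, u induces an endomorphism of the finite-dimensional K-vector space t^a K[[t]]^n / t^b K[[t]]^n, and the trace of this induced endomorphism equals Res(Tr(f·g′)), the coefficient of t^{−1} in the trace of the matrix f·g′. -/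
/-- The formal derivative of a Laurent series: the coefficient of `t^n` in `f'` is
`(n+1)` times the coefficient of `t^(n+1)` in `f`. -/
noncomputable def lder {K : Type*} [Field K] (f : LaurentSeries K) : LaurentSeries K where
  coeff n := (n + 1 : ℤ) • f.coeff (n + 1)
  isPWO_support' := by
    have hmono : Monotone (fun m : ℤ => m - 1) := fun a b hab => by simpa using hab
    have h : (Function.support fun n : ℤ => (n + 1 : ℤ) • f.coeff (n + 1)) ⊆
        (fun m : ℤ => m - 1) '' (Function.support f.coeff) := by
      intro n hn
      refine ⟨n + 1, fun h0 => ?_, by ring⟩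
      simp [Function.mem_support, h0] at hn
    exact (f.isPWO_support'.image_of_monotoneOn (hmono.monotoneOn _)).mono h

/-- Truncation of a Laurent series to nonnegative degrees. -/
noncomputable def trunc {K : Type*} [Field K] (f : LaurentSeries K) : LaurentSeries K where
  coeff m := if 0 ≤ m then f.coeff m else 0
  isPWO_support' := f.isPWO_support'.mono (fun m hm => by
    simp only [Function.mem_support] at hm ⊢
    intro h0
    apply hm
    split_ifs <;> simp [h0])

@[simp] lemma trunc_coeff {K : Type*} [Field K] (f : LaurentSeries K) (m : ℤ) :
    (trunc f).coeff m = if 0 ≤ m then f.coeff m else 0 := rfl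

/-- The projection of `K((t))` onto `K[[t]]` replacing all coefficients in negative
degrees by `0`, as a `K`-linear map. -/
noncomputable def piPlus (K : Type*) [Field K] :
    LaurentSeries K →ₗ[K] LaurentSeries K where
  toFun := trunc
  map_add' f g := by
    apply HahnSeries.ext
    funext m
    simp only [trunc_coeff, HahnSeries.coeff_add]
    split_ifs <;> simp
  map_smul' c f := by
    apply HahnSeries.ext
    funext m
    simp only [trunc_coeff, HahnSeries.coeff_smul, RingHom.id_apply]
    split_ifs <;> simp

/-- The componentwise projection of `K((t))ⁿ` onto `K[[t]]ⁿ`. -/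
noncomputable def piPlusVec (K : Type*) [Field K] (n : ℕ) :
    (Fin n → LaurentSeries K) →ₗ[K] (Fin n → LaurentSeries K) :=
  LinearMap.pi fun i => (piPlus K).comp (LinearMap.proj i)

/-- Multiplication of column vectors by a fixed square matrix of Laurent series, as a
`K`-linear operator on `K((t))ⁿ`. -/
noncomputable def mulVecK {K : Type*} [Field K] {n : ℕ}
    (A : Matrix (Fin n) (Fin n) (LaurentSeries K)) :
    (Fin n → LaurentSeries K) →ₗ[K] (Fin n → LaurentSeries K) where
  toFun v := A.mulVec v
  map_add' a b := by
    funext i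
    simp [Matrix.mulVec, dotProduct, mul_add, Finset.sum_add_distrib]
  map_smul' c a := by
    funext i
    simp only [Matrix.mulVec, dotProduct, RingHom.id_apply, Pi.smul_apply,
      ← HahnSeries.C_mul_eq_smul, Finset.mul_sum]
    exact Finset.sum_congr rfl fun j _ => by ring

/-- The lattice `t^a K[[t]] ⊆ K((t))`, as a `K`-subspace. -/
def latticeAbove (K : Type*) [Field K] (a : ℤ) : Submodule K (LaurentSeries K) where
  carrier := {h : LaurentSeries K | ∀ m : ℤ, m < a → h.coeff m = 0}
  add_mem' := by
    intro x y hx hy m hm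
    simp [HahnSeries.coeff_add, hx m hm, hy m hm]
  zero_mem' := by intro m hm; simp
  smul_mem' := by
    intro c x hx m hm
    simp [HahnSeries.coeff_smul, hx m hm]

/-- The lattice `t^a K[[t]]ⁿ ⊆ K((t))ⁿ`. -/
def latticeAboveVec (K : Type*) [Field K] (n : ℕ) (a : ℤ) :
    Submodule K (Fin n → LaurentSeries K) :=
  Submodule.pi Set.univ fun _ => latticeAbove K a

/-- The standard quotient-by-submodule construction, registered for subspaces of
`K((t))ⁿ` (instance search struggles to find it unaided here). -/
noncomputable instance latticeVecQuotient {L : Type*} [Field L] {n : ℕ}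
    (W : Submodule L (Fin n → LaurentSeries L)) :
    HasQuotient (↥W) (Submodule L ↥W) := Submodule.hasQuotient

section Aux
variable {K : Type*} [Field K]

@[simp] lemma lder_coeff (f : LaurentSeries K) (m : ℤ) :
    (lder f).coeff m = (m + 1 : ℤ) • f.coeff (m + 1) := rfl

lemma sum_coeff {ι : Type*} (s : Finset ι) (F : ι → LaurentSeries K) (m : ℤ) :
    (∑ i ∈ s, F i).coeff m = ∑ i ∈ s, (F i).coeff m := by
  classical
  induction s using Finset.induction with
  | empty => simp
  | insert _ _ h ih => simp [Finset.sum_insert h, ih, HahnSeries.coeff_add]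

lemma shift_coeff (X : LaurentSeries K) (m s : ℤ) :
    (X * HahnSeries.single m (1:K)).coeff s = X.coeff (s - m) := by
  have h : s - m + m = s := by ring
  conv_lhs => rw [← h]
  rw [HahnSeries.coeff_mul_single_add, mul_one]

noncomputable def truncAt (c : ℤ) (f : LaurentSeries K) : LaurentSeries K where
  coeff m := if c ≤ m then f.coeff m else 0
  isPWO_support' := f.isPWO_support'.mono (fun m hm => by
    simp only [Function.mem_support] at hm ⊢
    intro h0
    apply hm
    split_ifs <;> simp [h0])

@[simp] lemma truncAt_coeff (c : ℤ) (f : LaurentSeries K) (m : ℤ) :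
    (truncAt c f).coeff m = if c ≤ m then f.coeff m else 0 := rfl

lemma truncAt_eq {c : ℤ} {f : LaurentSeries K} (h : ∀ m < c, f.coeff m = 0) :
    truncAt c f = f := by
  apply HahnSeries.ext
  funext m
  rw [truncAt_coeff]
  split_ifs with h1
  · rfl
  · exact (h m (by omega)).symm

lemma trunc_single_mul (Q : LaurentSeries K) (m : ℤ) :
    trunc (Q * HahnSeries.single m 1) = truncAt (-m) Q * HahnSeries.single m 1 := by
  apply HahnSeries.ext
  funext s
  rw [trunc_coeff, shift_coeff, shift_coeff, truncAt_coeff]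
  split_ifs with h1 h2 h2 <;> first | rfl | omega

lemma mul_coeff_eq_sum (P Q : LaurentSeries K) (A B d : ℤ)
    (hP : ∀ k < A, P.coeff k = 0) (hQ : ∀ k < B, Q.coeff k = 0) :
    (P * Q).coeff d = ∑ k ∈ Finset.Icc A (d - B), P.coeff k * Q.coeff (d - k) := by
  classical
  rw [HahnSeries.coeff_mul]
  have hinj : Function.Injective (fun k : ℤ => (k, d - k)) := by
    intro x y h
    simpa using congrArg Prod.fst h
  rw [Finset.sum_subset (s₂ := (Finset.Icc A (d - B)).map ⟨fun k => (k, d - k), hinj⟩)]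
  · rw [Finset.sum_map]
    rfl
  · intro ij hij
    rw [Finset.mem_addAntidiagonal] at hij
    obtain ⟨h1, h2, h3⟩ := hij
    rw [HahnSeries.mem_support] at h1 h2
    have hA : A ≤ ij.1 := by by_contra h; exact h1 (hP _ (by omega))
    have hB : B ≤ ij.2 := by by_contra h; exact h2 (hQ _ (by omega))
    rw [Finset.mem_map]
    exact ⟨ij.1, by rw [Finset.mem_Icc]; omega, by
      simp only [Function.Embedding.coeFn_mk]
      ext <;> simp <;> omega⟩
  · intro x hx hnx
    by_contra hne
    apply hnx
    rw [Finset.mem_addAntidiagonal]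
    rw [Finset.mem_map] at hx
    obtain ⟨k, hk, rfl⟩ := hx
    simp only [Function.Embedding.coeFn_mk]
    refine ⟨?_, ?_, by ring⟩
    · rw [HahnSeries.mem_support]; intro h0; exact hne (by simp [h0])
    · rw [HahnSeries.mem_support]; intro h0; exact hne (by simp [h0])

lemma mul_coeff_zero_of (P Q : LaurentSeries K) (A B d : ℤ)
    (hP : ∀ k < A, P.coeff k = 0) (hQ : ∀ k < B, Q.coeff k = 0) (hd : d < A + B) :
    (P * Q).coeff d = 0 := by
  rw [mul_coeff_eq_sum P Q A B d hP hQ, Finset.Icc_eq_empty (by omega), Finset.sum_empty]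

end Aux

section Key
variable {K : Type*} [Field K]

lemma key_scalar (P Q : LaurentSeries K) (a' b' : ℤ) (ha : a' ≤ 0) (hb : 1 ≤ b')
    (hP : ∀ k < a', P.coeff k = 0) (hQ : ∀ k < 1 - b', Q.coeff k = 0) :
    (∑ m ∈ Finset.Ico a' b',
      ((if (0:ℤ) ≤ m then (P * Q).coeff 0 else 0) - (P * truncAt (-m) Q).coeff 0))
      = (Q * lder P).coeff (-1) := by
  classical
  -- the full product coefficient as a finite sum
  have hS : (P * Q).coeff 0 = ∑ k ∈ Finset.Ico a' b', P.coeff k * Q.coeff (-k) := by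
    rw [mul_coeff_eq_sum P Q a' (1 - b') 0 hP hQ]
    have h1 : (0 : ℤ) - (1 - b') = b' - 1 := by ring
    rw [h1, show Finset.Icc a' (b' - 1) = Finset.Ico a' b' from by
      ext k; simp [Finset.mem_Icc, Finset.mem_Ico]]
    exact Finset.sum_congr rfl fun k _ => by rw [zero_sub]
  -- the truncated product coefficient as a partial sum
  have hF : ∀ m ∈ Finset.Ico a' b', (P * truncAt (-m) Q).coeff 0 =
      ∑ k ∈ Finset.Ico a' b', (if k ≤ m then P.coeff k * Q.coeff (-k) else 0) := by
    intro m hm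
    rw [Finset.mem_Ico] at hm
    rw [mul_coeff_eq_sum P (truncAt (-m) Q) a' (-m) 0 hP
      (fun k hk => by rw [truncAt_coeff, if_neg (by omega)])]
    rw [← Finset.sum_filter]
    have h2 : Finset.filter (fun k => k ≤ m) (Finset.Ico a' b') = Finset.Icc a' (0 - -m) := by
      ext k; simp [Finset.mem_Icc, Finset.mem_Ico, Finset.mem_filter]; omega
    rw [← h2]
    refine Finset.sum_congr rfl fun k hk => ?_
    rw [Finset.mem_filter, Finset.mem_Ico] at hk
    rw [truncAt_coeff, if_pos (by omega), zero_sub]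
  have step1 : (∑ m ∈ Finset.Ico a' b',
      ((if (0:ℤ) ≤ m then (P * Q).coeff 0 else 0) - (P * truncAt (-m) Q).coeff 0))
      = ∑ m ∈ Finset.Ico a' b', ∑ k ∈ Finset.Ico a' b',
        ((if (0:ℤ) ≤ m then P.coeff k * Q.coeff (-k) else 0)
          - (if k ≤ m then P.coeff k * Q.coeff (-k) else 0)) := by
    refine Finset.sum_congr rfl fun m hm => ?_
    rw [hF m hm, hS, Finset.sum_sub_distrib]
    congr 1
    split_ifs with h
    · rfl
    · rw [Finset.sum_const_zero]
  rw [step1, Finset.sum_comm]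
  have step2 : ∀ k ∈ Finset.Ico a' b', (∑ m ∈ Finset.Ico a' b',
      ((if (0:ℤ) ≤ m then P.coeff k * Q.coeff (-k) else 0)
        - (if k ≤ m then P.coeff k * Q.coeff (-k) else 0)))
      = (k : K) * (P.coeff k * Q.coeff (-k)) := by
    intro k hk
    rw [Finset.mem_Ico] at hk
    rw [Finset.sum_sub_distrib, ← Finset.sum_filter, ← Finset.sum_filter]
    have e1 : Finset.filter (fun m : ℤ => 0 ≤ m) (Finset.Ico a' b') = Finset.Ico 0 b' := by
      ext m; simp [Finset.mem_filter, Finset.mem_Ico]; omega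
    have e2 : Finset.filter (fun m : ℤ => k ≤ m) (Finset.Ico a' b') = Finset.Ico k b' := by
      ext m; simp [Finset.mem_filter, Finset.mem_Ico]; omega
    rw [e1, e2, Finset.sum_const, Finset.sum_const, Int.card_Ico, Int.card_Ico,
      nsmul_eq_mul, nsmul_eq_mul, ← sub_mul]
    congr 1
    have h12 : ((b' - 0).toNat : ℤ) - ((b' - k).toNat : ℤ) = k := by omega
    have := congrArg (fun z : ℤ => (z : K)) h12
    push_cast at this ⊢
    exact this
  rw [Finset.sum_congr rfl step2]
  -- now the right-hand side
  have hlder : ∀ j < a' - 1, (lder P).coeff j = 0 := by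
    intro j hj
    rw [lder_coeff, hP (j + 1) (by omega), smul_zero]
  rw [mul_coeff_eq_sum Q (lder P) (1 - b') (a' - 1) (-1) hQ hlder]
  have h3 : (-1 : ℤ) - (a' - 1) = -a' := by ring
  rw [h3]
  refine Finset.sum_bij' (fun k _ => -k) (fun j _ => -j) ?_ ?_ ?_ ?_ ?_
  · intro k hk; simp only [Finset.mem_Ico] at hk; simp only [Finset.mem_Icc]; omega
  · intro j hj; simp only [Finset.mem_Icc] at hj; simp only [Finset.mem_Ico]; omega
  · intro k _; simp
  · intro j _; simp
  · intro k hk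
    show (k : K) * (P.coeff k * Q.coeff (-k)) = Q.coeff (-k) * (lder P).coeff (-1 - -k)
    have h4 : (-1 : ℤ) - -k = k - 1 := by ring
    rw [h4, lder_coeff]
    have h5 : k - 1 + 1 = k := by ring
    rw [h5, zsmul_eq_mul]
    push_cast
    ring

end Key

section MoreAux
variable {K : Type*} [Field K]

lemma trunc_eq_self {x : LaurentSeries K} (h : ∀ m < (0:ℤ), x.coeff m = 0) :
    trunc x = x := by
  apply HahnSeries.ext
  funext m
  rw [trunc_coeff]
  split_ifs with h1
  · rfl
  · exact (h m (by omega)).symm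

lemma mem_latticeAbove {a : ℤ} {h : LaurentSeries K} :
    h ∈ latticeAbove K a ↔ ∀ m < a, h.coeff m = 0 := Iff.rfl

lemma mem_latticeAboveVec {n : ℕ} {a : ℤ} {h : Fin n → LaurentSeries K} :
    h ∈ latticeAboveVec K n a ↔ ∀ i, ∀ m < a, (h i).coeff m = 0 := by
  rw [latticeAboveVec, Submodule.mem_pi]
  exact ⟨fun H i => H i (Set.mem_univ i), fun H i _ => H i⟩

open Classical in
/-- A lower bound for the support of a Laurent series. -/
noncomputable def bnd (h : LaurentSeries K) : ℤ := if h = 0 then 0 else h.order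

lemma coeff_bnd (h : LaurentSeries K) : ∀ m < bnd h, h.coeff m = 0 := by
  intro m hm
  rw [bnd] at hm
  classical
  split_ifs at hm with h0
  · simp [h0]
  · exact HahnSeries.coeff_eq_zero_of_lt_order hm

lemma mulVec_apply {n : ℕ} (A : Matrix (Fin n) (Fin n) (LaurentSeries K))
    (w : Fin n → LaurentSeries K) (i : Fin n) :
    A.mulVec w i = ∑ j, A i j * w j := rfl

end MoreAux

set_option maxHeartbeats 3200000 in
/-- **Tate's residue formula, matrix form.**  For `n × n` matrices `f, g` of Laurent
series and `π` the componentwise projection onto `K[[t]]ⁿ`, the operator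
`u = π∘m_g∘m_f − m_g∘π∘m_f` kills `t^b K[[t]]ⁿ` and has image contained in
`t^a K[[t]]ⁿ` for suitable integers `a ≤ b`; and for any such `a ≤ b` the trace of the
endomorphism induced by `u` on the finite-dimensional `K`-vector space
`t^a K[[t]]ⁿ / t^b K[[t]]ⁿ` equals `Res(Tr(f·g'))`. -/
theorem tate_trace_formula_matrix (K : Type*) [Field K] (n : ℕ) (hn : 1 ≤ n)
    (f g : Matrix (Fin n) (Fin n) (LaurentSeries K))
    (u : (Fin n → LaurentSeries K) →ₗ[K] (Fin n → LaurentSeries K))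
    (hu : u = piPlusVec K n ∘ₗ mulVecK g ∘ₗ mulVecK f -
      mulVecK g ∘ₗ piPlusVec K n ∘ₗ mulVecK f) :
    (∃ a b : ℤ, a ≤ b ∧ (∀ h ∈ latticeAboveVec K n b, u h = 0) ∧
      (∀ h : Fin n → LaurentSeries K, u h ∈ latticeAboveVec K n a)) ∧
    (∀ a b : ℤ, a ≤ b → (∀ h ∈ latticeAboveVec K n b, u h = 0) →
      ∀ ha : (∀ h : Fin n → LaurentSeries K, u h ∈ latticeAboveVec K n a),
        FiniteDimensional K
          (↥(latticeAboveVec K n a) ⧸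
            (latticeAboveVec K n b).comap (latticeAboveVec K n a).subtype) ∧
        ∃ e : (↥(latticeAboveVec K n a) ⧸
              (latticeAboveVec K n b).comap (latticeAboveVec K n a).subtype) →ₗ[K]
            (↥(latticeAboveVec K n a) ⧸
              (latticeAboveVec K n b).comap (latticeAboveVec K n a).subtype),
          (∀ h : ↥(latticeAboveVec K n a),
            e (Submodule.Quotient.mk h) = Submodule.Quotient.mk ⟨u ↑h, ha ↑h⟩) ∧
          LinearMap.trace K
            (↥(latticeAboveVec K n a) ⧸
              (latticeAboveVec K n b).comap (latticeAboveVec K n a).subtype) e =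
            (Matrix.trace (f * Matrix.of fun i j => lder (g i j))).coeff (-1)) := by
  classical
  -- a global lower bound `c` for the supports of all entries of `f` and `g`
  obtain ⟨c, hc0, hcf, hcg⟩ : ∃ c : ℤ, c ≤ 0 ∧ (∀ i j, ∀ m < c, (f i j).coeff m = 0)
      ∧ (∀ i j, ∀ m < c, (g i j).coeff m = 0) := by
    have hne : (Finset.univ : Finset (Fin n × Fin n)).Nonempty :=
      ⟨(⟨0, hn⟩, ⟨0, hn⟩), Finset.mem_univ _⟩
    refine ⟨min 0 (Finset.univ.inf' hne fun p => min (bnd (f p.1 p.2)) (bnd (g p.1 p.2))),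
      min_le_left _ _, ?_, ?_⟩
    · intro i j m hm
      refine coeff_bnd _ m (lt_of_lt_of_le hm ?_)
      exact le_trans (min_le_right _ _)
        (le_trans (Finset.inf'_le _ (Finset.mem_univ (i, j))) (min_le_left _ _))
    · intro i j m hm
      refine coeff_bnd _ m (lt_of_lt_of_le hm ?_)
      exact le_trans (min_le_right _ _)
        (le_trans (Finset.inf'_le _ (Finset.mem_univ (i, j))) (min_le_right _ _))
  -- pointwise description of `u`
  have hpi : ∀ w : Fin n → LaurentSeries K, piPlusVec K n w = fun i => trunc (w i) := by
    intro w
    funext i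
    simp [piPlusVec, piPlus, LinearMap.pi_apply]
  have huap : ∀ (v : Fin n → LaurentSeries K) (i : Fin n),
      u v i = trunc ((g.mulVec (f.mulVec v)) i)
        - (g.mulVec fun j => trunc ((f.mulVec v) j)) i := by
    intro v i
    rw [hu]
    simp only [LinearMap.sub_apply, LinearMap.comp_apply, Pi.sub_apply]
    have h1 : mulVecK f v = f.mulVec v := rfl
    have h2 : ∀ w, mulVecK g w = g.mulVec w := fun w => rfl
    rw [h1, hpi, h2, h2, hpi]
  constructor
  · -- existence of suitable a ≤ b
    refine ⟨c, -2 * c, by omega, ?_, ?_⟩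
    · -- `u` kills `t^(-2c) K[[t]]ⁿ`
      intro h hb
      rw [mem_latticeAboveVec] at hb
      have hfh : ∀ j, ∀ m < -c, ((f.mulVec h) j).coeff m = 0 := by
        intro j m hm
        rw [mulVec_apply, sum_coeff]
        refine Finset.sum_eq_zero fun k _ => ?_
        exact mul_coeff_zero_of _ _ c (-2 * c) m (hcf j k) (hb k) (by omega)
      have hgfh : ∀ i, ∀ m < (0:ℤ), ((g.mulVec (f.mulVec h)) i).coeff m = 0 := by
        intro i m hm
        rw [mulVec_apply, sum_coeff]
        refine Finset.sum_eq_zero fun k _ => ?_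
        exact mul_coeff_zero_of _ _ c (-c) m (hcg i k) (hfh k) (by omega)
      funext i
      rw [huap]
      have e1 : trunc ((g.mulVec (f.mulVec h)) i) = (g.mulVec (f.mulVec h)) i :=
        trunc_eq_self (hgfh i)
      have e2 : (fun j => trunc ((f.mulVec h) j)) = f.mulVec h := by
        funext j
        exact trunc_eq_self (fun m hm => hfh j m (by omega))
      rw [e1, e2]
      simp
    · -- the image of `u` is contained in `t^c K[[t]]ⁿ`
      intro h
      rw [mem_latticeAboveVec]
      intro i m hm
      rw [huap, HahnSeries.coeff_sub, trunc_coeff, if_neg (by omega), mulVec_apply, sum_coeff]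
      rw [Finset.sum_eq_zero, sub_zero]
      intro j _
      refine mul_coeff_zero_of _ _ c 0 m (hcg i j) ?_ (by omega)
      intro k hk
      rw [trunc_coeff, if_neg (by omega)]
  · -- the trace computation
    intro a b hab hkill ha
    -- the coordinate map on the sublattice
    obtain ⟨φ, hφap⟩ : ∃ φ : ↥(latticeAboveVec K n a) →ₗ[K]
        (({ x // x ∈ Finset.Ico a b } × Fin n) → K),
        ∀ (v : ↥(latticeAboveVec K n a)) (p : { x // x ∈ Finset.Ico a b } × Fin n),
          φ v p = ((v : Fin n → LaurentSeries K) p.2).coeff (p.1 : ℤ) := by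
      refine ⟨{ toFun := fun v p => ((v : Fin n → LaurentSeries K) p.2).coeff (p.1 : ℤ)
                map_add' := ?_, map_smul' := ?_ }, fun v p => rfl⟩
      · intro x y
        funext p
        simp [HahnSeries.coeff_add]
      · intro cc x
        funext p
        simp [HahnSeries.coeff_smul]
    have hker : LinearMap.ker φ =
        (latticeAboveVec K n b).comap (latticeAboveVec K n a).subtype := by
      ext v
      simp only [LinearMap.mem_ker, Submodule.mem_comap, Submodule.coe_subtype]
      constructor
      · intro h0
        rw [mem_latticeAboveVec]
        intro i m hm
        rcases lt_or_ge m a with hma | hma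
        · exact mem_latticeAboveVec.mp v.2 i m hma
        · have := congrFun h0 (⟨m, Finset.mem_Ico.mpr ⟨hma, hm⟩⟩, i)
          simpa [hφap] using this
      · intro hv
        funext p
        rw [hφap]
        rw [mem_latticeAboveVec] at hv
        simpa using hv p.2 (p.1 : ℤ) (Finset.mem_Ico.mp p.1.2).2
    have hsurj : Function.Surjective φ := by
      intro cvec
      have hmem : (fun i => ∑ p ∈ (Finset.Ico a b).attach,
          HahnSeries.single (p : ℤ) (cvec (p, i))) ∈ latticeAboveVec K n a := by
        rw [mem_latticeAboveVec]
        intro i m hm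
        rw [sum_coeff]
        refine Finset.sum_eq_zero fun p _ => ?_
        rw [HahnSeries.coeff_single, if_neg]
        intro heq
        have := (Finset.mem_Ico.mp p.2).1
        omega
      refine ⟨⟨_, hmem⟩, ?_⟩
      funext p
      obtain ⟨⟨m, hm⟩, i⟩ := p
      rw [hφap]
      show (∑ p ∈ (Finset.Ico a b).attach,
          HahnSeries.single (p : ℤ) (cvec (p, i))).coeff m = _
      rw [sum_coeff, Finset.sum_eq_single (⟨m, hm⟩ : { x // x ∈ Finset.Ico a b })]
      · rw [HahnSeries.coeff_single, if_pos rfl]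
      · intro q hq hne
        rw [HahnSeries.coeff_single, if_neg]
        intro heq
        exact hne (Subtype.ext heq.symm)
      · intro habs
        exact absurd (Finset.mem_attach _ _) habs
    have hle : (latticeAboveVec K n b).comap (latticeAboveVec K n a).subtype ≤
        LinearMap.ker φ := le_of_eq hker.symm
    obtain ⟨Φ, hΦmk, hΦbij⟩ : ∃ Φ : (↥(latticeAboveVec K n a) ⧸
          (latticeAboveVec K n b).comap (latticeAboveVec K n a).subtype) →ₗ[K]
        (({ x // x ∈ Finset.Ico a b } × Fin n) → K),
        (∀ v : ↥(latticeAboveVec K n a), Φ (Submodule.Quotient.mk v) = φ v) ∧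
          Function.Bijective Φ := by
      refine ⟨Submodule.liftQ _ φ hle, fun v => Submodule.liftQ_apply _ φ v, ?_, ?_⟩
      · rw [← LinearMap.ker_eq_bot]
        exact Submodule.ker_liftQ_eq_bot _ _ _ (le_of_eq hker)
      · intro cvec
        obtain ⟨v, hv⟩ := hsurj cvec
        exact ⟨Submodule.Quotient.mk v, by rw [Submodule.liftQ_apply, hv]⟩
    obtain ⟨E, hEmk⟩ : ∃ E : (↥(latticeAboveVec K n a) ⧸
          (latticeAboveVec K n b).comap (latticeAboveVec K n a).subtype) ≃ₗ[K]
        (({ x // x ∈ Finset.Ico a b } × Fin n) → K),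
        ∀ v : ↥(latticeAboveVec K n a), E (Submodule.Quotient.mk v) = φ v :=
      ⟨LinearEquiv.ofBijective Φ hΦbij, fun v => by
        rw [LinearEquiv.ofBijective_apply]
        exact hΦmk v⟩
    haveI hfd : FiniteDimensional K (↥(latticeAboveVec K n a) ⧸
        (latticeAboveVec K n b).comap (latticeAboveVec K n a).subtype) :=
      Module.Finite.of_injective Φ hΦbij.1
    refine ⟨hfd, ?_⟩
    have hres : ∀ x ∈ latticeAboveVec K n a, u x ∈ latticeAboveVec K n a := fun x _ => ha x
    have hcomp : (latticeAboveVec K n b).comap (latticeAboveVec K n a).subtype ≤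
        ((latticeAboveVec K n b).comap (latticeAboveVec K n a).subtype).comap
          (u.restrict hres) := by
      intro v hv
      rw [Submodule.mem_comap] at hv
      rw [Submodule.mem_comap, Submodule.mem_comap]
      have h0 : u ((latticeAboveVec K n a).subtype v) = 0 := hkill _ hv
      show ((latticeAboveVec K n a).subtype) ((u.restrict hres) v) ∈ _
      simp only [LinearMap.restrict_apply, Submodule.coe_subtype]
      rw [show u ↑v = 0 from h0]
      exact Submodule.zero_mem _
    refine ⟨Submodule.mapQ _ _ (u.restrict hres) hcomp, ?_, ?_⟩
    · intro h
      rw [Submodule.mapQ_apply]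
      congr 1
    · -- the trace computation itself
      obtain ⟨B, hB⟩ : ∃ B : Module.Basis ({ x // x ∈ Finset.Ico a b } × Fin n) K
          (↥(latticeAboveVec K n a) ⧸
            (latticeAboveVec K n b).comap (latticeAboveVec K n a).subtype),
          ∀ x q, B.repr x q = E x q :=
        ⟨Module.Basis.ofEquivFun E, fun x q => Module.Basis.ofEquivFun_repr_apply E x q⟩
      -- monomial vectors and their lattice membership
      have hvmem : ∀ (c' m : ℤ), c' ≤ m → ∀ i : Fin n,
          (Pi.single i (HahnSeries.single m (1:K)) : Fin n → LaurentSeries K) ∈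
            latticeAboveVec K n c' := by
        intro c' m hm i
        rw [mem_latticeAboveVec]
        intro k m' hm'
        rw [Pi.single_apply]
        split_ifs with hki
        · rw [HahnSeries.coeff_single, if_neg (by omega)]
        · simp
      -- the diagonal entries
      have hdiag : ∀ (p : { x // x ∈ Finset.Ico a b } × Fin n),
          (LinearMap.toMatrix B B (Submodule.mapQ _ _ (u.restrict hres) hcomp)) p p
            = ((u (Pi.single p.2 (HahnSeries.single (p.1 : ℤ) 1))) p.2).coeff (p.1 : ℤ) := by
        intro p
        have hBp : B p = Submodule.Quotient.mk
            (⟨Pi.single p.2 (HahnSeries.single (p.1 : ℤ) 1),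
              hvmem a _ (Finset.mem_Ico.mp p.1.2).1 p.2⟩ :
              ↥(latticeAboveVec K n a)) := by
          apply E.injective
          funext q
          rw [hEmk, hφap]
          have h1 : E (B p) q = ((B.repr (B p)) q) := (hB _ _).symm
          rw [h1, Module.Basis.repr_self, Finsupp.single_apply]
          show (if p = q then (1:K) else 0) = ((Pi.single p.2 (HahnSeries.single (p.1 : ℤ)
            (1:K)) : Fin n → LaurentSeries K) q.2).coeff (q.1 : ℤ)
          obtain ⟨⟨m, hm⟩, i⟩ := p
          obtain ⟨⟨m', hm'⟩, i'⟩ := q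
          simp only [Pi.single_apply, HahnSeries.coeff_single, Prod.mk.injEq,
            Subtype.mk.injEq]
          by_cases h2 : i' = i
          · subst h2
            by_cases h3 : m' = m
            · subst h3
              simp
            · have h4 : ∀ ii : Fin n, ¬(m = m' ∧ ii = ii) := fun ii h => h3 h.1.symm
              have h5 : ¬m = m' := fun h => h3 h.symm
              simp [h3, h4, h5]
          · have h4 : ¬(m = m' ∧ i = i') := fun h => h2 h.2.symm
            simp [h2, h4]
        rw [LinearMap.toMatrix_apply, hB, hBp, Submodule.mapQ_apply, hEmk, hφap,
          LinearMap.restrict_apply]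
      rw [LinearMap.trace_eq_matrix_trace K B]
      simp only [Matrix.trace, Matrix.diag]
      rw [Finset.sum_congr rfl (fun p _ => hdiag p), Fintype.sum_prod_type,
        Finset.sum_coe_sort (Finset.Ico a b)
          (fun m => ∑ i, ((u (Pi.single i (HahnSeries.single m 1))) i).coeff m)]
      -- extend the summation range
      have hsub : Finset.Ico a b ⊆ Finset.Ico (min a c) (max b (1 - c)) :=
        Finset.Ico_subset_Ico (min_le_left _ _) (le_max_left _ _)
      rw [Finset.sum_subset hsub ?hzero]
      case hzero =>
        intro m hmbig hmsmall
        refine Finset.sum_eq_zero fun i _ => ?_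
        rw [Finset.mem_Ico] at hmbig
        rw [Finset.mem_Ico] at hmsmall
        rcases lt_or_ge m a with hma | hma
        · exact mem_latticeAboveVec.mp (ha _) i m hma
        · have hbm : b ≤ m := by omega
          rw [hkill _ (hvmem b m hbm i)]
          simp
      -- unfold `u` on monomial vectors
      have hunfold : ∀ (m : ℤ) (i : Fin n),
          ((u (Pi.single i (HahnSeries.single m 1))) i).coeff m
            = ∑ j, ((if (0:ℤ) ≤ m then (g i j * f j i).coeff 0 else 0)
                - (g i j * truncAt (-m) (f j i)).coeff 0) := by
        intro m i
        rw [huap, HahnSeries.coeff_sub, trunc_coeff, Matrix.mulVec_single,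
          mulVec_apply, mulVec_apply, sum_coeff, sum_coeff, Finset.sum_sub_distrib]
        congr 1
        · split_ifs with h0
          · refine Finset.sum_congr rfl fun j _ => ?_
            show (g i j * (f j i * HahnSeries.single m 1)).coeff m = _
            rw [← mul_assoc, shift_coeff, sub_self]
          · rw [Finset.sum_const_zero]
        · refine Finset.sum_congr rfl fun j _ => ?_
          show (g i j * trunc (f j i * HahnSeries.single m 1)).coeff m = _
          rw [trunc_single_mul, ← mul_assoc, shift_coeff, sub_self]
      rw [Finset.sum_congr rfl (fun m _ =>
        Finset.sum_congr rfl (fun i _ => hunfold m i))]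
      rw [Finset.sum_comm]
      rw [Finset.sum_congr rfl (fun i _ => Finset.sum_comm)]
      have hks : ∀ i j, (∑ m ∈ Finset.Ico (min a c) (max b (1 - c)),
          ((if (0:ℤ) ≤ m then (g i j * f j i).coeff 0 else 0)
            - (g i j * truncAt (-m) (f j i)).coeff 0))
          = (f j i * lder (g i j)).coeff (-1) := by
        intro i j
        refine key_scalar (g i j) (f j i) (min a c) (max b (1 - c))
          (by omega) (by omega) ?_ ?_
        · intro k hk
          exact hcg i j k (by omega)
        · intro k hk
          exact hcf j i k (by omega)
      rw [Finset.sum_congr rfl (fun i _ => Finset.sum_congr rfl (fun j _ => hks i j))]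
      rw [sum_coeff]
      have hR : ∀ i, ((f * Matrix.of fun i j => lder (g i j)) i i).coeff (-1)
          = ∑ j, (f i j * lder (g j i)).coeff (-1) := by
        intro i
        rw [Matrix.mul_apply, sum_coeff]
        exact Finset.sum_congr rfl (fun j _ => by rw [Matrix.of_apply])
      rw [Finset.sum_congr rfl (fun i _ => hR i)]
      exact Finset.sum_comm
end

section
/- Let K be a field of characteristic 0, θ : K → K a derivation, and θ̃ : K((t)) → K((t)) the derivation obtained by applying θ to each coefficient (so θ̃(t) = 0). Let V be a finite-dimensional K((t))-vector space with a connection D, and let V = V₁ ⊕ V₂ be a decomposition into D-stable K((t))-subspaces such that there is no nonzero K((t))-linear map φ : V₁ → V₂ with φ ∘ D = D ∘ φ and no nonzero K((t))-linear map φ : V₂ → V₁ with φ ∘ D = D ∘ φ. Let E : V → V be an additive map satisfying E(f·v) = θ̃(f)·v + f·E(v) for all f ∈ K((t)), v ∈ V, and commuting with D, i.e., E ∘ D = D ∘ E. Then E(V₁) ⊆ V₁ and E(V₂) ⊆ V₂. -/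
/-- The coefficientwise extension of an additive map `θ : K → K` to a map
`K((t)) → K((t))` (so in particular `θ̃(t) = 0`). -/
noncomputable def coeffMap {K : Type*} [Field K] (θ : K →+ K) (f : LaurentSeries K) :
    LaurentSeries K where
  coeff n := θ (f.coeff n)
  isPWO_support' := f.isPWO_support'.mono (fun n hn => by
    simp only [Function.mem_support] at hn ⊢
    intro h0
    exact hn (by simp [h0]))


set_option synthInstance.maxHeartbeats 400000 in
lemma aux_stable
    (K : Type*) [Field K]
    (V : Type*) [AddCommGroup V] [Module (LaurentSeries K) V]
    [Module K V] [IsScalarTower K (LaurentSeries K) V]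
    (coeffMap' : LaurentSeries K → LaurentSeries K)
    (D : V →ₗ[K] V)
    (V₁ V₂ : Submodule (LaurentSeries K) V) (hcompl : IsCompl V₁ V₂)
    (hV₁ : ∀ v ∈ V₁, D v ∈ V₁) (hV₂ : ∀ v ∈ V₂, D v ∈ V₂)
    (hhor₁ : ∀ φ : V₁ →ₗ[LaurentSeries K] V₂,
      (∀ v : V₁, (↑(φ ⟨D ↑v, hV₁ ↑v v.2⟩) : V) = D ↑(φ v)) → φ = 0)
    (E : V → V)
    (hEadd : ∀ u v : V, E (u + v) = E u + E v)
    (hELeib' : ∀ (f : LaurentSeries K) (v : V), E (f • v) = coeffMap' f • v + f • E v)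
    (hcomm : ∀ v : V, E (D v) = D (E v)) :
    ∀ v ∈ V₁, E v ∈ V₁ := by
  set π₂ := V₂.linearProjOfIsCompl V₁ hcompl.symm with hπ₂
  have hker : ∀ x : V, π₂ x = 0 ↔ x ∈ V₁ :=
    fun x => Submodule.linearProjOfIsCompl_apply_eq_zero_iff hcompl.symm
  have hDcomm : ∀ x : V, (↑(π₂ (D x)) : V) = D ↑(π₂ x) := by
    intro x
    have hx : x = ↑(V₁.linearProjOfIsCompl V₂ hcompl x) + ↑(π₂ x) := by
      rw [hπ₂]; exact (Submodule.projection_add_projection_eq_self hcompl x).symm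
    rw [hx]
    set a : V := ↑(V₁.linearProjOfIsCompl V₂ hcompl x)
    set b : V := ↑(π₂ x)
    have ha : a ∈ V₁ := (V₁.linearProjOfIsCompl V₂ hcompl x).2
    have hb : b ∈ V₂ := (π₂ x).2
    have h2 : π₂ a = 0 := Submodule.projectionOnto_apply_of_mem_right hcompl.symm ha
    have h3 : π₂ b = ⟨b, hb⟩ := Submodule.linearProjOfIsCompl_apply_left hcompl.symm ⟨b, hb⟩
    have h4 : π₂ (D a) = 0 :=
      Submodule.projectionOnto_apply_of_mem_right hcompl.symm (hV₁ a ha)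
    have h5 : π₂ (D b) = ⟨D b, hV₂ b hb⟩ :=
      Submodule.linearProjOfIsCompl_apply_left hcompl.symm ⟨D b, hV₂ b hb⟩
    rw [show D (a + b) = D a + D b from D.map_add a b, π₂.map_add, π₂.map_add, h2, h3, h4, h5]
    simp
  let φ : V₁ →ₗ[LaurentSeries K] V₂ :=
  { toFun := fun v => π₂ (E ↑v)
    map_add' := fun u v => by
      show π₂ (E ↑(u + v)) = π₂ (E ↑u) + π₂ (E ↑v)
      rw [Submodule.coe_add, hEadd, π₂.map_add]
    map_smul' := fun f v => by
      show π₂ (E ↑(f • v)) = f • π₂ (E ↑v)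
      have h1 : (↑(f • v) : V) = f • (v : V) := rfl
      rw [h1, hELeib', π₂.map_add, π₂.map_smul, π₂.map_smul,
        show π₂ (v : V) = 0 from Submodule.projectionOnto_apply_of_mem_right hcompl.symm v.2]
      simp }
  have hφ : φ = 0 := by
    apply hhor₁
    intro v
    show (↑(π₂ (E (D ↑v))) : V) = D ↑(π₂ (E ↑v))
    rw [hcomm, hDcomm]
  intro v hv
  have := congrFun (congrArg DFunLike.coe hφ) ⟨v, hv⟩
  have h0 : π₂ (E v) = 0 := by simpa [φ] using this
  exact (hker (E v)).1 h0

/-- If `V = V₁ ⊕ V₂` is a `D`-stable decomposition of a connection `(V, D)` over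
`K((t))` with no nonzero horizontal maps between the summands, then any additive map
`E` which is a `θ̃`-derivation compatible with the module structure and commutes
with `D` preserves both summands. -/
theorem horizontal_decomposition_stable
    (K : Type*) [Field K] [CharZero K] (θ : K →+ K)
    (hθ : ∀ a b : K, θ (a * b) = a * θ b + θ a * b)
    (V : Type*) [AddCommGroup V] [Module (LaurentSeries K) V]
    [Module.Finite (LaurentSeries K) V]
    [Module K V] [IsScalarTower K (LaurentSeries K) V]
    (D : V →ₗ[K] V)
    (hD : ∀ (f : LaurentSeries K) (v : V), D (f • v) = lder f • v + f • D v)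
    (V₁ V₂ : Submodule (LaurentSeries K) V) (hcompl : IsCompl V₁ V₂)
    (hV₁ : ∀ v ∈ V₁, D v ∈ V₁) (hV₂ : ∀ v ∈ V₂, D v ∈ V₂)
    (hhor₁ : ∀ φ : V₁ →ₗ[LaurentSeries K] V₂,
      (∀ v : V₁, (↑(φ ⟨D ↑v, hV₁ ↑v v.2⟩) : V) = D ↑(φ v)) → φ = 0)
    (hhor₂ : ∀ φ : V₂ →ₗ[LaurentSeries K] V₁,
      (∀ v : V₂, (↑(φ ⟨D ↑v, hV₂ ↑v v.2⟩) : V) = D ↑(φ v)) → φ = 0)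
    (E : V → V)
    (hEadd : ∀ u v : V, E (u + v) = E u + E v)
    (hELeib : ∀ (f : LaurentSeries K) (v : V), E (f • v) = coeffMap θ f • v + f • E v)
    (hcomm : ∀ v : V, E (D v) = D (E v)) :
    (∀ v ∈ V₁, E v ∈ V₁) ∧ (∀ v ∈ V₂, E v ∈ V₂) := by
  refine ⟨aux_stable K V (coeffMap θ) D V₁ V₂ hcompl hV₁ hV₂ hhor₁ E hEadd hELeib hcomm,
    aux_stable K V (coeffMap θ) D V₂ V₁ hcompl.symm hV₂ hV₁ hhor₂ E hEadd hELeib hcomm⟩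
end
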